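/- arXiv:1510.06967 — 3 statements merged into one kernel-verified Lean document; each statement's English description precedes it below -/
import Mathlib

section
/- If a history H is conflict-opaque and legal, then its conflict graph CG(H) is acyclic. -/
namespace STM

/-- Transactional events: reads (with `none` meaning the read returned abort `A`),
writes, commits and aborts, indexed by transaction ids. -/
inductive Ev (Tid Obj Val : Type) : Type where
  | read  (t : Tid) (x : Obj) (v : Option Val)
  | write (t : Tid) (x : Obj) (v : Val)
  | commit (t : Tid)
  | abort (t : Tid)

/-- A history is a finite sequence of pairwise distinct events. -/
structure History (Tid Obj Val : Type) : Type where
  evs : List (Ev Tid Obj Val)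
  nodup : evs.Nodup

variable {Tid Obj Val : Type}

def Ev.tid : Ev Tid Obj Val → Tid
  | .read t _ _ => t
  | .write t _ _ => t
  | .commit t => t
  | .abort t => t

namespace History

def Mem (H : History Tid Obj Val) (e : Ev Tid Obj Val) : Prop := e ∈ H.evs

/-- `e1 <_H e2` : e1 occurs strictly before e2 in H. -/
def Lt (H : History Tid Obj Val) (e1 e2 : Ev Tid Obj Val) : Prop :=
  ∃ i j : Fin H.evs.length, i < j ∧ H.evs.get i = e1 ∧ H.evs.get j = e2

/-- Two histories are equivalent if they have the same set of events. -/
def Equiv (H1 H2 : History Tid Obj Val) : Prop :=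
  ∀ e, H1.Mem e ↔ H2.Mem e

/-- `x` belongs to the write set of transaction `t` in `H`. -/
def Wset (H : History Tid Obj Val) (t : Tid) (x : Obj) : Prop :=
  ∃ v, H.Mem (Ev.write t x v)

/-- The set of transactions appearing in `H`. -/
def txns (H : History Tid Obj Val) : Set Tid := {t | ∃ e, H.Mem e ∧ e.tid = t}

def committed (H : History Tid Obj Val) (t : Tid) : Prop := H.Mem (Ev.commit t)

def aborted (H : History Tid Obj Val) (t : Tid) : Prop := H.Mem (Ev.abort t)

def incomplete (H : History Tid Obj Val) (t : Tid) : Prop :=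
  t ∈ H.txns ∧ ¬ H.committed t ∧ ¬ H.aborted t

/-- Event-level conflict order of `H`: w-w, w-r and r-w conflicts,
oriented by the order of events in `H`. -/
def COe (H : History Tid Obj Val) (e1 e2 : Ev Tid Obj Val) : Prop :=
  H.Lt e1 e2 ∧
  ((∃ t1 t2 x, t1 ≠ t2 ∧ e1 = Ev.commit t1 ∧ e2 = Ev.commit t2 ∧
      H.Wset t1 x ∧ H.Wset t2 x) ∨
   (∃ t1 t2 x v, t1 ≠ t2 ∧ e1 = Ev.commit t1 ∧ e2 = Ev.read t2 x (some v) ∧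
      H.Wset t1 x) ∨
   (∃ t1 t2 x v, t1 ≠ t2 ∧ e1 = Ev.read t1 x (some v) ∧ e2 = Ev.commit t2 ∧
      H.Wset t2 x))

/-- Transaction-level conflict order `T_{t1} ≺_H^CO T_{t2}`. -/
def CO (H : History Tid Obj Val) (t1 t2 : Tid) : Prop :=
  ∃ e1 e2, e1.tid = t1 ∧ e2.tid = t2 ∧ H.COe e1 e2

/-- Real-time order: `t1` completes before `t2` begins
(every event of `t1` precedes every event of `t2`). -/
def RT (H : History Tid Obj Val) (t1 t2 : Tid) : Prop :=
  t1 ∈ H.txns ∧ t2 ∈ H.txns ∧ t1 ≠ t2 ∧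
  ∀ e1 e2, H.Mem e1 → H.Mem e2 → e1.tid = t1 → e2.tid = t2 → H.Lt e1 e2

/-- A history is t-sequential if every two transactions are related
by the real-time order. -/
def TSequential (H : History Tid Obj Val) : Prop :=
  ∀ t1 t2, t1 ∈ H.txns → t2 ∈ H.txns → t1 ≠ t2 → H.RT t1 t2 ∨ H.RT t2 t1

/-- `H` is valid: every successful read reads a value written by a
transaction that committed before it. -/
def Valid (H : History Tid Obj Val) : Prop :=
  ∀ t x v, H.Mem (Ev.read t x (some v)) →
    ∃ j, H.Lt (Ev.commit j) (Ev.read t x (some v)) ∧ H.Mem (Ev.write j x v)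

/-- `H` is legal: for every successful read, the transaction of its last write
(the latest commit preceding the read among transactions writing `x`)
wrote the value `v` that was read. -/
def Legal (H : History Tid Obj Val) : Prop :=
  ∀ t x v, H.Mem (Ev.read t x (some v)) →
    ∃ i, H.Lt (Ev.commit i) (Ev.read t x (some v)) ∧ H.Wset i x ∧
      (∀ j, H.Lt (Ev.commit j) (Ev.read t x (some v)) → H.Wset j x →
        j = i ∨ H.Lt (Ev.commit j) (Ev.commit i)) ∧
      H.Mem (Ev.write i x v)

/-- `Hc` is the completion `H̄` of `H`: an abort event is inserted
immediately after the last event of every incomplete transaction. -/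
def IsCompletion (H Hc : History Tid Obj Val) : Prop :=
  (∀ e, Hc.Mem e ↔ (H.Mem e ∨ ∃ t, H.incomplete t ∧ e = Ev.abort t)) ∧
  (∀ e1 e2, H.Mem e1 → H.Mem e2 → (H.Lt e1 e2 ↔ Hc.Lt e1 e2)) ∧
  (∀ t, H.incomplete t →
    (∀ e, H.Mem e → e.tid = t → Hc.Lt e (Ev.abort t)) ∧
    (∀ e, H.Mem e → (Hc.Lt (Ev.abort t) e ↔
       ∀ e', H.Mem e' → e'.tid = t → H.Lt e' e)))

/-- Edge of the conflict graph `CG(H)`: real-time or conflict order. -/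
def CGedge (H : History Tid Obj Val) (t1 t2 : Tid) : Prop :=
  H.RT t1 t2 ∨ H.CO t1 t2

/-- The conflict graph of `H` is acyclic. -/
def CGAcyclic (H : History Tid Obj Val) : Prop :=
  ∀ t, ¬ Relation.TransGen H.CGedge t t

/-- `H` is conflict-opaque: `H` is valid and there is a t-sequential legal
history `S` equivalent to some completion `H̄` of `H` respecting
`≺_H^RT` and `≺_H^CO`. -/
def CoOpaque (H : History Tid Obj Val) : Prop :=
  H.Valid ∧ ∃ Hc S : History Tid Obj Val, H.IsCompletion Hc ∧
    S.TSequential ∧ S.Legal ∧ S.Equiv Hc ∧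
    (∀ t1 t2, H.RT t1 t2 → S.RT t1 t2) ∧
    (∀ t1 t2, H.CO t1 t2 → S.CO t1 t2)

/-- `H` is opaque: as conflict-opacity, but `S` need only respect `≺_H^RT`. -/
def Opaque (H : History Tid Obj Val) : Prop :=
  H.Valid ∧ ∃ Hc S : History Tid Obj Val, H.IsCompletion Hc ∧
    S.TSequential ∧ S.Legal ∧ S.Equiv Hc ∧
    (∀ t1 t2, H.RT t1 t2 → S.RT t1 t2)

end History
end STM

namespace STM
namespace History

variable {Tid Obj Val : Type}

lemma Lt.mem_left {H : History Tid Obj Val} {e1 e2 : Ev Tid Obj Val}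
    (h : H.Lt e1 e2) : H.Mem e1 := by
  obtain ⟨i, j, _, h1, _⟩ := h
  exact h1 ▸ H.evs.get_mem i

lemma Lt.mem_right {H : History Tid Obj Val} {e1 e2 : Ev Tid Obj Val}
    (h : H.Lt e1 e2) : H.Mem e2 := by
  obtain ⟨i, j, _, _, h2⟩ := h
  exact h2 ▸ H.evs.get_mem j

lemma Lt.asymm {H : History Tid Obj Val} {e1 e2 : Ev Tid Obj Val}
    (h : H.Lt e1 e2) (h' : H.Lt e2 e1) : False := by
  obtain ⟨i, j, hij, h1, h2⟩ := h
  obtain ⟨i', j', hij', h1', h2'⟩ := h'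
  have hji : j = i' := H.nodup.get_inj_iff.mp (h2.trans h1'.symm)
  have hij2 : i = j' := H.nodup.get_inj_iff.mp (h1.trans h2'.symm)
  omega

lemma Lt.trans' {H : History Tid Obj Val} {e1 e2 e3 : Ev Tid Obj Val}
    (h : H.Lt e1 e2) (h' : H.Lt e2 e3) : H.Lt e1 e3 := by
  obtain ⟨i, j, hij, h1, h2⟩ := h
  obtain ⟨i', j', hij', h1', h2'⟩ := h'
  have : j = i' := H.nodup.get_inj_iff.mp (h2.trans h1'.symm)
  exact ⟨i, j', by omega, h1, h2'⟩

lemma RT.trans {S : History Tid Obj Val} {t1 t2 t3 : Tid}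
    (h : S.RT t1 t2) (h' : S.RT t2 t3) : S.RT t1 t3 := by
  obtain ⟨ht1, ht2, hne, hlt⟩ := h
  obtain ⟨_, ht3, hne', hlt'⟩ := h'
  obtain ⟨e2, he2, he2t⟩ := ht2
  refine ⟨ht1, ht3, ?_, ?_⟩
  · rintro rfl
    obtain ⟨e1, he1, he1t⟩ := ht1
    exact (hlt e1 e2 he1 he2 he1t he2t).asymm (hlt' e2 e1 he2 he1 he2t he1t)
  · intro e1 e3 he1 he3 h1 h3
    exact (hlt e1 e2 he1 he2 h1 he2t).trans' (hlt' e2 e3 he2 he3 he2t h3)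

/-- In a t-sequential history, every `CO` edge is an `RT` edge. -/
lemma co_imp_rt {S : History Tid Obj Val} (hseq : S.TSequential)
    {t1 t2 : Tid} (h : S.CO t1 t2) : S.RT t1 t2 := by
  obtain ⟨e1, e2, h1, h2, hlt, hc⟩ := h
  have hm1 : S.Mem e1 := hlt.mem_left
  have hm2 : S.Mem e2 := hlt.mem_right
  have ht1 : t1 ∈ S.txns := ⟨e1, hm1, h1⟩
  have ht2 : t2 ∈ S.txns := ⟨e2, hm2, h2⟩
  have hne : t1 ≠ t2 := by
    rcases hc with ⟨a, b, x, hab, ha, hb, _⟩ | ⟨a, b, x, v, hab, ha, hb, _⟩ |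
      ⟨a, b, x, v, hab, ha, hb, _⟩ <;>
      · subst ha hb; simp only [Ev.tid] at h1 h2; subst h1 h2; exact hab
  rcases hseq t1 t2 ht1 ht2 hne with hrt | hrt
  · exact hrt
  · exact absurd (hrt.2.2.2 e2 e1 hm2 hm1 h2 h1) (fun h' => hlt.asymm h')

end History
end STM

open STM History in
/-- If a history is conflict-opaque and legal, then its conflict graph is acyclic. -/
theorem cgAcyclic_of_coOpaque {Tid Obj Val : Type}
    (H : STM.History Tid Obj Val)
    (hop : H.CoOpaque) (hleg : H.Legal) :
    H.CGAcyclic := by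
  obtain ⟨-, Hc, S, -, hseq, -, -, hrt, hco⟩ := hop
  intro t htg
  have key : ∀ a b, Relation.TransGen H.CGedge a b → S.RT a b := by
    intro a b h
    induction h with
    | single h => exact h.elim (fun h => hrt _ _ h) (fun h => co_imp_rt hseq (hco _ _ h))
    | tail _ h ih =>
      exact ih.trans (h.elim (fun h => hrt _ _ h) (fun h => co_imp_rt hseq (hco _ _ h)))
  exact (key t t htg).2.2.1 rfl
end

section
/- If a history H is legal and its conflict graph CG(H) is acyclic, then H is conflict-opaque. -/
namespace STMAux
open List

variable {α : Type*} {l : List α} {a b c : α}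

theorem pair_sublist_iff_exists {l : List α} {a b : α} :
    [a, b] <+ l ↔ ∃ i j : Fin l.length, i < j ∧ l.get i = a ∧ l.get j = b := by
  constructor
  · intro h
    induction l with
    | nil => simp at h
    | cons x l ih =>
      cases h with
      | cons _ h' =>
        obtain ⟨i, j, hij, ha, hb⟩ := ih h'
        refine ⟨⟨i + 1, by simp [Nat.succ_lt_succ i.isLt]⟩,
          ⟨j + 1, by simp [Nat.succ_lt_succ j.isLt]⟩, by simpa using hij, ?_, ?_⟩
        · simpa using ha
        · simpa using hb
      | cons_cons _ h' =>
        have hb : b ∈ l := singleton_sublist.mp h'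
        obtain ⟨j, hj⟩ := mem_iff_get.mp hb
        exact ⟨⟨0, by simp⟩, ⟨j + 1, by simp [Nat.succ_lt_succ j.isLt]⟩, by simp [Fin.lt_def], rfl,
          by simpa using hj⟩
  · intro h
    induction l with
    | nil => obtain ⟨i, -, -⟩ := h; exact absurd i.isLt (by simp)
    | cons x l ih =>
      obtain ⟨⟨iv, hi⟩, ⟨jv, hj⟩, hij, ha, hb⟩ := h
      have hij' : iv < jv := hij
      cases iv with
      | zero =>
        cases jv with
        | zero => omega
        | succ kv =>
          have hb' : l.get ⟨kv, by simpa using hj⟩ = b := hb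
          have hbm : b ∈ l := hb' ▸ l.get_mem _
          have : a :: [b] <+ a :: l := Sublist.cons₂ a (singleton_sublist.mpr hbm)
          have hxa : x = a := ha
          rw [← hxa] at this ⊢
          exact this
      | succ iv =>
        cases jv with
        | zero => omega
        | succ kv =>
          refine Sublist.cons x (ih ⟨⟨iv, by simpa using hi⟩, ⟨kv, by simpa using hj⟩,
            by simpa using hij', ha, hb⟩)

theorem pair_sublist_total (hne : a ≠ b) (ha : a ∈ l) (hb : b ∈ l) :
    [a, b] <+ l ∨ [b, a] <+ l := by
  obtain ⟨i, hi⟩ := mem_iff_get.mp ha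
  obtain ⟨j, hj⟩ := mem_iff_get.mp hb
  have hij : i ≠ j := by rintro rfl; exact hne (hi ▸ hj ▸ rfl)
  rcases lt_or_gt_of_ne hij with h | h
  · exact Or.inl (pair_sublist_iff_exists.mpr ⟨i, j, h, hi, hj⟩)
  · exact Or.inr (pair_sublist_iff_exists.mpr ⟨j, i, h, hj, hi⟩)

theorem pair_sublist_asymm (hn : l.Nodup) (h1 : [a, b] <+ l) (h2 : [b, a] <+ l) : False := by
  obtain ⟨i, j, hij, ha1, hb1⟩ := pair_sublist_iff_exists.mp h1
  obtain ⟨i', j', hij', hb2, ha2⟩ := pair_sublist_iff_exists.mp h2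
  have e1 : i = j' := (hn.get_inj_iff).mp (ha1.trans ha2.symm)
  have e2 : j = i' := (hn.get_inj_iff).mp (hb1.trans hb2.symm)
  subst e1; subst e2
  exact absurd (hij.trans hij') (lt_irrefl _)

theorem pair_sublist_trans (hn : l.Nodup) (h1 : [a, b] <+ l) (h2 : [b, c] <+ l) :
    [a, c] <+ l := by
  obtain ⟨i, j, hij, ha1, hb1⟩ := pair_sublist_iff_exists.mp h1
  obtain ⟨i', j', hij', hb2, hc2⟩ := pair_sublist_iff_exists.mp h2
  have e : j = i' := (hn.get_inj_iff).mp (hb1.trans hb2.symm)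
  subst e
  exact pair_sublist_iff_exists.mpr ⟨i, j', hij.trans hij', ha1, hc2⟩

theorem pair_sublist_irrefl (hn : l.Nodup) (h : [a, a] <+ l) : False := by
  obtain ⟨i, j, hij, ha1, ha2⟩ := pair_sublist_iff_exists.mp h
  have : i = j := (hn.get_inj_iff).mp (ha1.trans ha2.symm)
  omega

theorem sublist_flatten_mono {L1 L2 : List (List α)} (h : L1 <+ L2) :
    L1.flatten <+ L2.flatten := by
  induction h with
  | slnil => exact Sublist.refl _
  | cons x h ih =>
    rw [flatten_cons]
    exact ih.trans (sublist_append_right _ _)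
  | cons_cons x h ih =>
    rw [flatten_cons, flatten_cons]
    exact Sublist.append (Sublist.refl x) ih

end STMAux
namespace STM
open List

namespace History
variable {Tid Obj Val : Type}

theorem lt_iff_pair (K : History Tid Obj Val) {a b : Ev Tid Obj Val} :
    K.Lt a b ↔ [a, b] <+ K.evs := by
  unfold History.Lt
  exact STMAux.pair_sublist_iff_exists.symm

theorem mem_of_lt_left (K : History Tid Obj Val) {a b : Ev Tid Obj Val} (h : K.Lt a b) :
    K.Mem a :=
  (K.lt_iff_pair.mp h).subset (by simp)

theorem mem_of_lt_right (K : History Tid Obj Val) {a b : Ev Tid Obj Val} (h : K.Lt a b) :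
    K.Mem b :=
  (K.lt_iff_pair.mp h).subset (by simp)

theorem lt_total' (K : History Tid Obj Val) {a b : Ev Tid Obj Val} (hne : a ≠ b)
    (ha : K.Mem a) (hb : K.Mem b) : K.Lt a b ∨ K.Lt b a := by
  rcases STMAux.pair_sublist_total hne ha hb with h | h
  · exact Or.inl (K.lt_iff_pair.mpr h)
  · exact Or.inr (K.lt_iff_pair.mpr h)

theorem lt_asymm' (K : History Tid Obj Val) {a b : Ev Tid Obj Val}
    (h1 : K.Lt a b) (h2 : K.Lt b a) : False :=
  STMAux.pair_sublist_asymm K.nodup (K.lt_iff_pair.mp h1) (K.lt_iff_pair.mp h2)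

theorem lt_trans' (K : History Tid Obj Val) {a b c : Ev Tid Obj Val}
    (h1 : K.Lt a b) (h2 : K.Lt b c) : K.Lt a c :=
  K.lt_iff_pair.mpr
    (STMAux.pair_sublist_trans K.nodup (K.lt_iff_pair.mp h1) (K.lt_iff_pair.mp h2))

theorem lt_irrefl' (K : History Tid Obj Val) {a : Ev Tid Obj Val} (h : K.Lt a a) : False :=
  STMAux.pair_sublist_irrefl K.nodup (K.lt_iff_pair.mp h)

end History
end STM
namespace STM
open List

variable {Tid Obj Val : Type}

/-- `e` is a last event of its transaction in `H`. -/
def LastEv (H : History Tid Obj Val) (e : Ev Tid Obj Val) : Prop :=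
  ∀ e', H.Mem e' → e'.tid = e.tid → e' = e ∨ H.Lt e' e

open Classical in
noncomputable def blk (H : History Tid Obj Val) (e : Ev Tid Obj Val) : List (Ev Tid Obj Val) :=
  if H.incomplete e.tid ∧ LastEv H e then [e, Ev.abort e.tid] else [e]

noncomputable def compList (H : History Tid Obj Val) : List (Ev Tid Obj Val) :=
  (H.evs.map (blk H)).flatten

theorem mem_blk (H : History Tid Obj Val) {e e' : Ev Tid Obj Val} :
    e' ∈ blk H e ↔ e' = e ∨ (H.incomplete e.tid ∧ LastEv H e ∧ e' = Ev.abort e.tid) := by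
  unfold blk
  split_ifs with h
  · constructor
    · intro hm
      rcases (by simpa using hm : e' = e ∨ e' = Ev.abort e.tid) with h' | h'
      · exact Or.inl h'
      · exact Or.inr ⟨h.1, h.2, h'⟩
    · rintro (rfl | ⟨-, -, rfl⟩) <;> simp
  · constructor
    · intro hm; exact Or.inl (by simpa using hm)
    · rintro (rfl | ⟨h1, h2, rfl⟩)
      · simp
      · exact absurd ⟨h1, h2⟩ h

theorem self_mem_blk (H : History Tid Obj Val) (e : Ev Tid Obj Val) : e ∈ blk H e :=
  (mem_blk H).mpr (Or.inl rfl)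

theorem head_sublist_blk (H : History Tid Obj Val) (e : Ev Tid Obj Val) : [e] <+ blk H e :=
  singleton_sublist.mpr (self_mem_blk H e)

theorem exists_last (H : History Tid Obj Val) (t : Tid) (ht : t ∈ H.txns) :
    ∃ e, H.Mem e ∧ e.tid = t ∧ LastEv H e := by
  classical
  set l := H.evs.filter (fun e => decide (e.tid = t)) with hl
  have hne : l ≠ [] := by
    obtain ⟨e0, he0, ht0⟩ := ht
    exact List.ne_nil_of_mem (List.mem_filter.mpr ⟨he0, by simp [ht0]⟩)
  have hmem : l.getLast hne ∈ l := List.getLast_mem hne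
  have hsub : l <+ H.evs := List.filter_sublist
  have htl : (l.getLast hne).tid = t := by
    have := (List.mem_filter.mp hmem).2; simpa using this
  refine ⟨l.getLast hne, hsub.subset hmem, htl, ?_⟩
  intro e' he' htid'
  have he'l : e' ∈ l := List.mem_filter.mpr ⟨he', by simp [htid'.trans htl]⟩
  by_cases heq : e' = l.getLast hne
  · exact Or.inl heq
  · right
    have hsplit := List.dropLast_append_getLast hne
    have hdl : e' ∈ l.dropLast := by
      rw [← hsplit] at he'l
      rcases List.mem_append.mp he'l with h | h
      · exact h
      · exact absurd (by simpa using h) heq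
    have hpair : [e', l.getLast hne] <+ l := by
      have : [e'] ++ [l.getLast hne] <+ l.dropLast ++ [l.getLast hne] :=
        Sublist.append (singleton_sublist.mpr hdl) (Sublist.refl _)
      rwa [hsplit] at this
    exact H.lt_iff_pair.mpr (hpair.trans hsub)

theorem mem_compList (H : History Tid Obj Val) {e : Ev Tid Obj Val} :
    e ∈ compList H ↔ (H.Mem e ∨ ∃ t, H.incomplete t ∧ e = Ev.abort t) := by
  unfold compList
  rw [List.mem_flatten]
  constructor
  · rintro ⟨l, hl, hel⟩
    obtain ⟨e', he', rfl⟩ := List.mem_map.mp hl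
    rcases (mem_blk H).mp hel with rfl | ⟨hinc, _, rfl⟩
    · exact Or.inl he'
    · exact Or.inr ⟨e'.tid, hinc, rfl⟩
  · rintro (he | ⟨t, hinc, rfl⟩)
    · exact ⟨blk H e, List.mem_map_of_mem he, self_mem_blk H e⟩
    · obtain ⟨el, hel, htl, hlast⟩ := exists_last H t hinc.1
      refine ⟨blk H el, List.mem_map_of_mem hel, ?_⟩
      exact (mem_blk H).mpr (Or.inr ⟨by rwa [htl], hlast, by rw [htl]⟩)

theorem nodup_compList (H : History Tid Obj Val) : (compList H).Nodup := by
  unfold compList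
  rw [List.nodup_flatten]
  constructor
  · intro l hl
    obtain ⟨e, he, rfl⟩ := List.mem_map.mp hl
    unfold blk
    split_ifs with h
    · refine List.nodup_cons.mpr ⟨?_, List.nodup_singleton _⟩
      simp only [List.mem_singleton]
      intro heq
      exact h.1.2.2 (heq ▸ he)
    · simp
  · rw [List.pairwise_map]
    have hp : H.evs.Pairwise (· ≠ ·) := H.nodup
    refine hp.imp_of_mem ?_
    intro e1 e2 h1 h2 hne x hx1 hx2
    rcases (mem_blk H).mp hx1 with rfl | ⟨hi1, hl1, rfl⟩
    · rcases (mem_blk H).mp hx2 with heq | ⟨hi2, hl2, heq⟩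
      · exact hne heq
      · subst heq; exact hi2.2.2 h1
    · rcases (mem_blk H).mp hx2 with heq | ⟨hi2, hl2, heq⟩
      · subst heq; exact hi1.2.2 h2
      · have htid : e1.tid = e2.tid := by injection heq
        rcases hl1 e2 h2 htid.symm with heq2 | hlt2
        · exact hne heq2.symm
        · rcases hl2 e1 h1 htid with heq1 | hlt1
          · exact hne heq1
          · exact H.lt_asymm' hlt1 hlt2

theorem lt_compList_of_lt (H : History Tid Obj Val) {a b : Ev Tid Obj Val} (h : H.Lt a b) :
    [a, b] <+ compList H := by
  have hs : [a, b] <+ H.evs := H.lt_iff_pair.mp h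
  have hm : [blk H a, blk H b] <+ H.evs.map (blk H) := by simpa using hs.map (blk H)
  refine Sublist.trans ?_ (STMAux.sublist_flatten_mono hm)
  simp only [flatten_cons, flatten_nil, append_nil]
  exact Sublist.append (head_sublist_blk H a) (head_sublist_blk H b)

noncomputable def completion (H : History Tid Obj Val) : History Tid Obj Val :=
  ⟨compList H, nodup_compList H⟩

theorem isCompletion_completion (H : History Tid Obj Val) :
    H.IsCompletion (completion H) := by
  have hlt : ∀ {a b : Ev Tid Obj Val}, H.Lt a b → (completion H).Lt a b := by
    intro a b h
    exact (completion H).lt_iff_pair.mpr (lt_compList_of_lt H h)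
  refine ⟨fun e => mem_compList H, ?_, ?_⟩
  · intro e1 e2 h1 h2
    constructor
    · exact hlt
    · intro h
      have hne : e1 ≠ e2 := by
        rintro rfl; exact (completion H).lt_irrefl' h
      rcases H.lt_total' hne h1 h2 with h' | h'
      · exact h'
      · exact absurd (hlt h') (fun hh => (completion H).lt_asymm' h hh)
  · intro t hinc
    obtain ⟨el, hel, htl, hlast⟩ := exists_last H t hinc.1
    have hblk : blk H el = [el, Ev.abort t] := by
      unfold blk
      rw [if_pos ⟨by rwa [htl], hlast⟩, htl]
    have habel : [el, Ev.abort t] <+ compList H := by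
      have h1 : blk H el ∈ H.evs.map (blk H) := List.mem_map_of_mem hel
      have h2 := List.sublist_flatten_of_mem h1
      rwa [hblk] at h2
    have hLtel : (completion H).Lt el (Ev.abort t) := (completion H).lt_iff_pair.mpr habel
    have habmem : Ev.abort t ∈ blk H el := by rw [hblk]; simp
    have hA : ∀ e, H.Mem e → e.tid = t → (completion H).Lt e (Ev.abort t) := by
      intro e he htid
      by_cases heq : e = el
      · exact heq ▸ hLtel
      · rcases hlast e he (by rw [htid, htl]) with heq' | hlt'
        · exact absurd heq' heq
        · exact (completion H).lt_trans'
            ((completion H).lt_iff_pair.mpr (lt_compList_of_lt H hlt')) hLtel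
    refine ⟨hA, ?_⟩
    intro e he
    constructor
    · intro habLt e' he' ht'
      by_contra hnlt
      by_cases heq : e' = e
      · exact (completion H).lt_asymm' habLt (heq ▸ hA e' he' ht')
      · rcases H.lt_total' heq he' he with h' | h'
        · exact hnlt h'
        · have c1 : (completion H).Lt e e' :=
            (completion H).lt_iff_pair.mpr (lt_compList_of_lt H h')
          have c2 : (completion H).Lt e' (Ev.abort t) := hA e' he' ht'
          exact (completion H).lt_irrefl'
            ((completion H).lt_trans' ((completion H).lt_trans' habLt c1) c2)
    · intro hall
      have hlee : H.Lt el e := hall el hel htl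
      have hm : [blk H el, blk H e] <+ H.evs.map (blk H) := by
        simpa using (H.lt_iff_pair.mp hlee).map (blk H)
      have h2 := STMAux.sublist_flatten_mono hm
      have h3 : [Ev.abort t, e] <+ [blk H el, blk H e].flatten := by
        simp only [flatten_cons, flatten_nil, append_nil]
        exact Sublist.append (singleton_sublist.mpr habmem) (head_sublist_blk H e)
      exact (completion H).lt_iff_pair.mpr (h3.trans h2)

end STM
namespace STM
open List

variable {Tid Obj Val : Type}

theorem exists_topo (H : History Tid Obj Val) (hacy : H.CGAcyclic) :
    ∃ L : List Tid, L.Nodup ∧ (∀ t, t ∈ L ↔ t ∈ H.txns) ∧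
      (∀ t1 t2, Relation.TransGen H.CGedge t1 t2 → t1 ∈ L → t2 ∈ L → [t1, t2] <+ L) := by
  classical
  set q : Tid → Tid → Prop := fun a b => Relation.TransGen H.CGedge a b ∨ a = b with hq
  haveI : IsPartialOrder Tid q := by
    refine { refl := fun a => Or.inr rfl, trans := ?_, antisymm := ?_ }
    · intro a b c hab hbc
      rcases hab with h1 | h1
      · rcases hbc with h2 | h2
        · exact Or.inl (h1.trans h2)
        · exact Or.inl (h2 ▸ h1)
      · exact h1 ▸ hbc
    · intro a b hab hba
      rcases hab with h1 | h1
      · rcases hba with h2 | h2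
        · exact absurd (h1.trans h2) (hacy a)
        · exact h2.symm
      · exact h1
  obtain ⟨s, hlin, hqs⟩ := extend_partialOrder q
  haveI hpo := hlin.toIsPartialOrder
  haveI hpre := hpo.toIsPreorder
  haveI := hpre.toIsTrans
  haveI := hpo.toAntisymm
  haveI := hlin.toTotal
  haveI : DecidableRel s := fun a b => Classical.propDecidable _
  set L0 := (H.evs.map Ev.tid).dedup with hL0
  set L := List.insertionSort s L0 with hL
  have hperm : L ~ L0 := List.perm_insertionSort s L0
  have hnd : L.Nodup := hperm.nodup_iff.mpr (List.nodup_dedup _)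
  have hsorted : L.Pairwise s := List.pairwise_insertionSort s L0
  have hmemL : ∀ t, t ∈ L ↔ t ∈ H.txns := by
    intro t
    rw [hperm.mem_iff, hL0, List.mem_dedup, List.mem_map]
    constructor
    · rintro ⟨e, he, rfl⟩; exact ⟨e, he, rfl⟩
    · rintro ⟨e, he, rfl⟩; exact ⟨e, he, rfl⟩
  refine ⟨L, hnd, hmemL, ?_⟩
  intro t1 t2 hr h1 h2
  have hne : t1 ≠ t2 := by rintro rfl; exact hacy t1 hr
  obtain ⟨i, hi⟩ := List.mem_iff_get.mp h1
  obtain ⟨j, hj⟩ := List.mem_iff_get.mp h2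
  have hij : i ≠ j := by rintro rfl; exact hne (hi ▸ hj ▸ rfl)
  rcases lt_or_gt_of_ne hij with h | h
  · exact STMAux.pair_sublist_iff_exists.mpr ⟨i, j, h, hi, hj⟩
  · exfalso
    have hs21 : s t2 t1 := by
      have := hsorted.rel_get_of_lt h
      rwa [hi, hj] at this
    have hs12 : s t1 t2 := hqs _ _ (Or.inl hr)
    exact hne (_root_.antisymm hs12 hs21)

noncomputable def ftid (C : List (Ev Tid Obj Val)) (t : Tid) : List (Ev Tid Obj Val) :=
  C.filter (fun e => @decide (e.tid = t) (Classical.propDecidable _))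

theorem mem_ftid {C : List (Ev Tid Obj Val)} {t : Tid} {e : Ev Tid Obj Val} :
    e ∈ ftid C t ↔ e ∈ C ∧ e.tid = t := by
  unfold ftid
  rw [List.mem_filter]
  constructor
  · rintro ⟨h1, h2⟩; exact ⟨h1, @of_decide_eq_true _ (Classical.propDecidable _) h2⟩
  · rintro ⟨h1, h2⟩; exact ⟨h1, @decide_eq_true _ (Classical.propDecidable _) h2⟩

noncomputable def seqList (C : List (Ev Tid Obj Val)) (L : List Tid) : List (Ev Tid Obj Val) :=
  (L.map (ftid C)).flatten

theorem mem_seqList {C : List (Ev Tid Obj Val)} {L : List Tid} {e : Ev Tid Obj Val} :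
    e ∈ seqList C L ↔ e ∈ C ∧ e.tid ∈ L := by
  unfold seqList
  rw [List.mem_flatten]
  constructor
  · rintro ⟨l, hl, hel⟩
    obtain ⟨t, ht, rfl⟩ := List.mem_map.mp hl
    obtain ⟨h1, h2⟩ := mem_ftid.mp hel
    exact ⟨h1, h2 ▸ ht⟩
  · rintro ⟨h1, h2⟩
    exact ⟨ftid C e.tid, List.mem_map_of_mem h2, mem_ftid.mpr ⟨h1, rfl⟩⟩

theorem nodup_seqList {C : List (Ev Tid Obj Val)} {L : List Tid}
    (hC : C.Nodup) (hL : L.Nodup) : (seqList C L).Nodup := by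
  unfold seqList
  rw [List.nodup_flatten]
  constructor
  · intro l hl
    obtain ⟨t, ht, rfl⟩ := List.mem_map.mp hl
    exact hC.filter _
  · rw [List.pairwise_map]
    refine hL.imp ?_
    intro t1 t2 hne x hx1 hx2
    exact hne ((mem_ftid.mp hx1).2.symm.trans (mem_ftid.mp hx2).2)

theorem block_order {C : List (Ev Tid Obj Val)} {L : List Tid} {t1 t2 : Tid}
    {e1 e2 : Ev Tid Obj Val} (h : [t1, t2] <+ L) (h1 : e1 ∈ C) (ht1 : e1.tid = t1)
    (h2 : e2 ∈ C) (ht2 : e2.tid = t2) : [e1, e2] <+ seqList C L := by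
  have hm : [ftid C t1, ftid C t2] <+ L.map (ftid C) := by simpa using h.map (ftid C)
  refine Sublist.trans ?_ (STMAux.sublist_flatten_mono hm)
  simp only [flatten_cons, flatten_nil, append_nil]
  exact Sublist.append (singleton_sublist.mpr (mem_ftid.mpr ⟨h1, ht1⟩))
    (singleton_sublist.mpr (mem_ftid.mpr ⟨h2, ht2⟩))

theorem same_tid_order {C : List (Ev Tid Obj Val)} {L : List Tid} {e1 e2 : Ev Tid Obj Val}
    (h : [e1, e2] <+ C) (ht : e1.tid = e2.tid) (hL : e2.tid ∈ L) :
    [e1, e2] <+ seqList C L := by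
  have h1 : ([e1, e2].filter (fun e => @decide (e.tid = e2.tid) (Classical.propDecidable _)))
      = [e1, e2] := by
    rw [List.filter_eq_self]
    intro a ha
    rcases (by simpa using ha : a = e1 ∨ a = e2) with rfl | rfl
    · exact @decide_eq_true _ (Classical.propDecidable _) ht
    · exact @decide_eq_true _ (Classical.propDecidable _) rfl
  have h2 : [e1, e2] <+ ftid C e2.tid := by
    have := h.filter (fun e => @decide (e.tid = e2.tid) (Classical.propDecidable _))
    rwa [h1] at this
  refine h2.trans ?_
  exact List.sublist_flatten_of_mem (List.mem_map_of_mem hL)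

end STM
open STM History in
/-- If a history is legal and its conflict graph is acyclic,
then it is conflict-opaque. -/
theorem coOpaque_of_legal_of_cgAcyclic {Tid Obj Val : Type}
    (H : STM.History Tid Obj Val)
    (hleg : H.Legal) (hacy : H.CGAcyclic) :
    H.CoOpaque := by
  classical
  have hvalid : H.Valid := by
    intro t x v hr
    obtain ⟨i, hlt, -, -, hw⟩ := hleg t x v hr
    exact ⟨i, hlt, hw⟩
  obtain ⟨L, hLnd, hLmem, hLtopo⟩ := exists_topo H hacy
  set S : STM.History Tid Obj Val :=
    ⟨seqList (compList H) L, nodup_seqList (nodup_compList H) hLnd⟩ with hSdef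
  have hcomp := isCompletion_completion H
  have htidC : ∀ e : STM.Ev Tid Obj Val, e ∈ compList H → e.tid ∈ H.txns := by
    intro e he
    rcases (mem_compList H).mp he with h | ⟨t, hinc, rfl⟩
    · exact ⟨e, h, rfl⟩
    · exact hinc.1
  have hSmem : ∀ e, S.Mem e ↔ e ∈ compList H := by
    intro e
    constructor
    · intro h; exact (mem_seqList.mp h).1
    · intro h; exact mem_seqList.mpr ⟨h, (hLmem _).mpr (htidC e h)⟩
  have hEquiv : S.Equiv (completion H) := by
    intro e; rw [hSmem]; exact Iff.rfl
  have htxnsS : ∀ t, t ∈ H.txns → t ∈ S.txns := by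
    rintro t ⟨e, he, htid⟩
    exact ⟨e, (hSmem e).mpr ((mem_compList H).mpr (Or.inl he)), htid⟩
  have hblockRT : ∀ t1 t2, t1 ≠ t2 → List.Sublist [t1, t2] L → S.RT t1 t2 := by
    intro t1 t2 hne hsub
    have h1L : t1 ∈ L := hsub.subset (by simp)
    have h2L : t2 ∈ L := hsub.subset (by simp)
    refine ⟨htxnsS _ ((hLmem _).mp h1L), htxnsS _ ((hLmem _).mp h2L), hne, ?_⟩
    intro e1 e2 he1 he2 ht1 ht2
    exact S.lt_iff_pair.mpr (block_order hsub ((hSmem e1).mp he1) ht1 ((hSmem e2).mp he2) ht2)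
  have hRTS : ∀ t1 t2, t1 ∈ H.txns → t2 ∈ H.txns →
      Relation.TransGen H.CGedge t1 t2 → S.RT t1 t2 := by
    intro t1 t2 h1 h2 hr
    have hne : t1 ≠ t2 := by rintro rfl; exact hacy t1 hr
    exact hblockRT _ _ hne (hLtopo _ _ hr ((hLmem _).mpr h1) ((hLmem _).mpr h2))
  have hLofS : ∀ t, t ∈ S.txns → t ∈ L := by
    rintro t ⟨e, he, rfl⟩
    exact (mem_seqList.mp he).2
  have hseq : S.TSequential := by
    intro t1 t2 h1 h2 hne
    rcases STMAux.pair_sublist_total hne (hLofS _ h1) (hLofS _ h2) with h | h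
    · exact Or.inl (hblockRT _ _ hne h)
    · exact Or.inr (hblockRT _ _ hne.symm h)
  have hWmem : ∀ t x v, S.Mem (STM.Ev.write t x v) ↔ H.Mem (STM.Ev.write t x v) := by
    intro t x v
    rw [hSmem, mem_compList]
    constructor
    · rintro (h | ⟨t', -, h⟩)
      · exact h
      · exact absurd h (by simp)
    · exact Or.inl
  have hWset : ∀ t x, S.Wset t x ↔ H.Wset t x := by
    intro t x
    constructor
    · rintro ⟨v, hv⟩; exact ⟨v, (hWmem t x v).mp hv⟩
    · rintro ⟨v, hv⟩; exact ⟨v, (hWmem t x v).mpr hv⟩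
  have hCmem : ∀ t, S.Mem (STM.Ev.commit t) → H.Mem (STM.Ev.commit t) := by
    intro t h
    rcases (mem_compList H).mp ((hSmem _).mp h) with h | ⟨t', -, h⟩
    · exact h
    · exact absurd h (by simp)
  have hRmem : ∀ t x v, S.Mem (STM.Ev.read t x v) → H.Mem (STM.Ev.read t x v) := by
    intro t x v h
    rcases (mem_compList H).mp ((hSmem _).mp h) with h | ⟨t', -, h⟩
    · exact h
    · exact absurd h (by simp)
  have hHS : ∀ e : STM.Ev Tid Obj Val, H.Mem e → S.Mem e := by
    intro e he
    exact (hSmem e).mpr ((mem_compList H).mpr (Or.inl he))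
  have hsame : ∀ e1 e2 : STM.Ev Tid Obj Val, H.Lt e1 e2 → e1.tid = e2.tid → S.Lt e1 e2 := by
    intro e1 e2 h ht
    have hc : List.Sublist [e1, e2] (compList H) := lt_compList_of_lt H h
    have hL2 : e2.tid ∈ L := (hLmem _).mpr (htidC e2 (hc.subset (by simp)))
    exact S.lt_iff_pair.mpr (same_tid_order hc ht hL2)
  have hCOpres : ∀ t1 t2, H.CO t1 t2 → S.CO t1 t2 := by
    rintro t1 t2 ⟨e1, e2, ht1, ht2, hlt, hshape⟩
    have he1H : H.Mem e1 := H.mem_of_lt_left hlt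
    have he2H : H.Mem e2 := H.mem_of_lt_right hlt
    have hne : t1 ≠ t2 := by
      rcases hshape with ⟨a, b, x, hab, rfl, rfl, -, -⟩ | ⟨a, b, x, v, hab, rfl, rfl, -⟩ |
        ⟨a, b, x, v, hab, rfl, rfl, -⟩ <;>
        · simp only [STM.Ev.tid] at ht1 ht2
          rw [← ht1, ← ht2]
          exact hab
    have hSRT : S.RT t1 t2 := hRTS t1 t2 ⟨e1, he1H, ht1⟩ ⟨e2, he2H, ht2⟩
      (Relation.TransGen.single (Or.inr ⟨e1, e2, ht1, ht2, hlt, hshape⟩))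
    have hSlt : S.Lt e1 e2 := hSRT.2.2.2 e1 e2 (hHS e1 he1H) (hHS e2 he2H) ht1 ht2
    refine ⟨e1, e2, ht1, ht2, hSlt, ?_⟩
    rcases hshape with ⟨a, b, x, hab, h1, h2, hw1, hw2⟩ | ⟨a, b, x, v, hab, h1, h2, hw⟩ |
      ⟨a, b, x, v, hab, h1, h2, hw⟩
    · exact Or.inl ⟨a, b, x, hab, h1, h2, (hWset a x).mpr hw1, (hWset b x).mpr hw2⟩
    · exact Or.inr (Or.inl ⟨a, b, x, v, hab, h1, h2, (hWset a x).mpr hw⟩)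
    · exact Or.inr (Or.inr ⟨a, b, x, v, hab, h1, h2, (hWset b x).mpr hw⟩)
  have hRTpres : ∀ t1 t2, H.RT t1 t2 → S.RT t1 t2 := by
    intro t1 t2 h
    exact hRTS t1 t2 h.1 h.2.1 (Relation.TransGen.single (Or.inl h))
  have hlegS : S.Legal := by
    intro t x v hrS
    have hrH : H.Mem (STM.Ev.read t x (some v)) := hRmem t x _ hrS
    obtain ⟨i, hiLt, hiW, hmax, hiwrite⟩ := hleg t x v hrH
    have hiC : H.Mem (STM.Ev.commit i) := H.mem_of_lt_left hiLt
    have hcr : ∀ j : Tid, (STM.Ev.commit j : STM.Ev Tid Obj Val) ≠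
        STM.Ev.read t x (some v) := by intro j h; cases h
    have key : ∀ j, H.Mem (STM.Ev.commit j) → H.Wset j x →
        (H.Lt (STM.Ev.commit j) (STM.Ev.read t x (some v)) ↔
          S.Lt (STM.Ev.commit j) (STM.Ev.read t x (some v))) := by
      intro j hjC hjW
      by_cases hjt : j = t
      · subst hjt
        constructor
        · intro h; exact hsame _ _ h rfl
        · intro h
          rcases H.lt_total' (hcr j) hjC hrH with h' | h'
          · exact h'
          · exact absurd (hsame _ _ h' rfl) (fun h2 => S.lt_asymm' h h2)
      · constructor
        · intro h
          have hco : H.CO j t := ⟨STM.Ev.commit j, STM.Ev.read t x (some v), rfl, rfl, h,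
            Or.inr (Or.inl ⟨j, t, x, v, hjt, rfl, rfl, hjW⟩)⟩
          have hrt := hRTS j t ⟨_, hjC, rfl⟩ ⟨_, hrH, rfl⟩
            (Relation.TransGen.single (Or.inr hco))
          exact hrt.2.2.2 _ _ (hHS _ hjC) (hHS _ hrH) rfl rfl
        · intro h
          rcases H.lt_total' (hcr j) hjC hrH with h' | h'
          · exact h'
          · exfalso
            have hco : H.CO t j := ⟨STM.Ev.read t x (some v), STM.Ev.commit j, rfl, rfl, h',
              Or.inr (Or.inr ⟨t, j, x, v, fun hh => hjt hh.symm, rfl, rfl, hjW⟩)⟩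
            have hrt := hRTS t j ⟨_, hrH, rfl⟩ ⟨_, hjC, rfl⟩
              (Relation.TransGen.single (Or.inr hco))
            exact S.lt_asymm' h (hrt.2.2.2 _ _ (hHS _ hrH) (hHS _ hjC) rfl rfl)
    have keyb : ∀ j, j ≠ i → H.Mem (STM.Ev.commit j) → H.Wset j x →
        H.Lt (STM.Ev.commit j) (STM.Ev.commit i) →
        S.Lt (STM.Ev.commit j) (STM.Ev.commit i) := by
      intro j hne hjC hjW h
      have hco : H.CO j i := ⟨STM.Ev.commit j, STM.Ev.commit i, rfl, rfl, h,
        Or.inl ⟨j, i, x, hne, rfl, rfl, hjW, hiW⟩⟩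
      have hrt := hRTS j i ⟨_, hjC, rfl⟩ ⟨_, hiC, rfl⟩
        (Relation.TransGen.single (Or.inr hco))
      exact hrt.2.2.2 _ _ (hHS _ hjC) (hHS _ hiC) rfl rfl
    refine ⟨i, (key i hiC hiW).mp hiLt, (hWset i x).mpr hiW, ?_, (hWmem i x v).mpr hiwrite⟩
    intro j hjS hjWS
    have hjW : H.Wset j x := (hWset j x).mp hjWS
    have hjC : H.Mem (STM.Ev.commit j) := hCmem j (S.mem_of_lt_left hjS)
    have hjH : H.Lt (STM.Ev.commit j) (STM.Ev.read t x (some v)) := (key j hjC hjW).mpr hjS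
    rcases hmax j hjH hjW with rfl | hlt'
    · exact Or.inl rfl
    · by_cases hji : j = i
      · exact Or.inl hji
      · exact Or.inr (keyb j hji hjC hjW hlt')
  exact ⟨hvalid, completion H, S, hcomp, hseq, hlegS, hEquiv, hRTpres, hCOpres⟩
end

section
/- A legal history H is conflict-opaque if and only if its conflict graph CG(H) is acyclic. -/
namespace STMAux
open List

variable {α β : Type*}

/-- `a` occurs strictly before `b` in `l`. -/
def llt (l : List α) (a b : α) : Prop :=
  ∃ i j : Fin l.length, i < j ∧ l.get i = a ∧ l.get j = b

theorem pair_sublist_of_idx : ∀ (l : List α) (i j : ℕ) (hij : i < j) (hj : j < l.length),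
    [l.get ⟨i, lt_trans hij hj⟩, l.get ⟨j, hj⟩] <+ l := by
  intro l
  induction l with
  | nil => intro i j hij hj; simp at hj
  | cons x l ih =>
    intro i j hij hj
    match i, j with
    | 0, j+1 =>
      have hj' : j < l.length := by simpa using hj
      have : l.get ⟨j, hj'⟩ ∈ l := l.get_mem _
      simpa using (List.singleton_sublist.2 this).cons₂ x
    | i+1, j+1 =>
      have hj' : j < l.length := by simpa using hj
      exact (ih i j (by omega) hj').cons x

theorem llt_iff_sublist {l : List α} {a b : α} : llt l a b ↔ [a, b] <+ l := by
  constructor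
  · rintro ⟨i, j, hij, rfl, rfl⟩
    have := pair_sublist_of_idx l i j hij j.isLt
    simpa using this
  · intro h
    rw [cons_sublist_iff] at h
    obtain ⟨r₁, r₂, hl, ha, hb⟩ := h
    rw [singleton_sublist] at hb
    obtain ⟨i, hi, hgi⟩ := List.mem_iff_getElem.1 ha
    obtain ⟨j, hj, hgj⟩ := List.mem_iff_getElem.1 hb
    subst hl
    have h2 : r₁.length + j < (r₁ ++ r₂).length := by simp [List.length_append]; omega
    refine ⟨⟨i, by simp [List.length_append]; omega⟩, ⟨r₁.length + j, h2⟩,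
      by simp [Fin.lt_iff_val_lt_val]; omega, ?_, ?_⟩
    · rw [List.get_eq_getElem, List.getElem_append_left hi]
      exact hgi
    · simp only [List.get_eq_getElem, Fin.val_mk]
      rw [List.getElem_append_right (by omega)]
      simpa using hgj

theorem llt.mem_left {l : List α} {a b : α} (h : llt l a b) : a ∈ l := by
  obtain ⟨i, j, _, rfl, _⟩ := h; exact l.get_mem _

theorem llt.mem_right {l : List α} {a b : α} (h : llt l a b) : b ∈ l := by
  obtain ⟨i, j, _, _, rfl⟩ := h; exact l.get_mem _

theorem llt_irrefl {l : List α} (hnd : l.Nodup) (a : α) : ¬ llt l a a := by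
  rintro ⟨i, j, hij, h1, h2⟩
  have heq : i = j := (List.nodup_iff_injective_get.1 hnd) (h1.trans h2.symm)
  have : (i : ℕ) < j := hij
  rw [heq] at this
  omega

theorem llt_asymm {l : List α} (hnd : l.Nodup) {a b : α} (h : llt l a b) : ¬ llt l b a := by
  rintro ⟨i, j, hij, h1, h2⟩
  obtain ⟨i', j', hij', h1', h2'⟩ := h
  have inj := List.nodup_iff_injective_get.1 hnd
  have e1 : j = i' := inj (h2.trans h1'.symm)
  have e2 : j' = i := inj (h2'.trans h1.symm)
  have n1 : (i : ℕ) < j := hij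
  have n2 : (i' : ℕ) < j' := hij'
  rw [Fin.ext_iff] at e1 e2
  omega

theorem llt_trans {l : List α} (hnd : l.Nodup) {a b c : α}
    (h1 : llt l a b) (h2 : llt l b c) : llt l a c := by
  obtain ⟨i, j, hij, ha, hb⟩ := h1
  obtain ⟨i', j', hij', hb', hc⟩ := h2
  have inj := List.nodup_iff_injective_get.1 hnd
  have e1 : j = i' := inj (hb.trans hb'.symm)
  have n1 : (i : ℕ) < j := hij
  have n2 : (i' : ℕ) < j' := hij'
  rw [Fin.ext_iff] at e1
  exact ⟨i, j', by rw [Fin.lt_iff_val_lt_val]; omega, ha, hc⟩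

theorem llt_total {l : List α} {a b : α} (ha : a ∈ l) (hb : b ∈ l) (hab : a ≠ b) :
    llt l a b ∨ llt l b a := by
  obtain ⟨i, hi⟩ := mem_iff_get.1 ha
  obtain ⟨j, hj⟩ := mem_iff_get.1 hb
  rcases lt_trichotomy (i : ℕ) j with h | h | h
  · exact Or.inl ⟨i, j, h, hi, hj⟩
  · exact absurd (hi.symm.trans (by rw [show i = j from Fin.ext h, hj])) hab
  · exact Or.inr ⟨j, i, h, hj, hi⟩

theorem llt_of_sublist {l l' : List α} {a b : α} (hs : l' <+ l) (h : llt l' a b) :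
    llt l a b :=
  llt_iff_sublist.2 ((llt_iff_sublist.1 h).trans hs)

theorem llt_filter {l : List α} {p : α → Bool} {a b : α} (h : llt l a b)
    (hpa : p a) (hpb : p b) : llt (l.filter p) a b := by
  rw [llt_iff_sublist] at h ⊢
  have := h.filter p
  rwa [List.filter_cons_of_pos hpa, List.filter_cons_of_pos hpb, List.filter_nil] at this

theorem llt_flatMap_of_llt {L : List α} {f : α → List β} {a1 a2 : α} {e1 e2 : β}
    (h : llt L a1 a2) (h1 : e1 ∈ f a1) (h2 : e2 ∈ f a2) : llt (L.flatMap f) e1 e2 := by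
  rw [llt_iff_sublist] at h ⊢
  rw [cons_sublist_iff] at h
  obtain ⟨r₁, r₂, rfl, ha1, ha2⟩ := h
  rw [singleton_sublist] at ha2
  rw [flatMap_append]
  have m1 : e1 ∈ r₁.flatMap f := mem_flatMap.2 ⟨a1, ha1, h1⟩
  have m2 : e2 ∈ r₂.flatMap f := mem_flatMap.2 ⟨a2, ha2, h2⟩
  exact (Sublist.append (singleton_sublist.2 m1) (singleton_sublist.2 m2) : [e1] ++ [e2] <+ _)

theorem llt_flatMap_of_mem {L : List α} {f : α → List β} {a : α} {e1 e2 : β}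
    (ha : a ∈ L) (h : llt (f a) e1 e2) : llt (L.flatMap f) e1 e2 := by
  obtain ⟨P, Q, rfl⟩ := List.append_of_mem ha
  rw [llt_iff_sublist] at h ⊢
  rw [flatMap_append, flatMap_cons]
  refine h.trans ((List.sublist_append_left _ _).trans (List.sublist_append_right _ _))

theorem llt_flatMap_elim {L : List α} {f : α → List β} {e1 e2 : β}
    (h : llt (L.flatMap f) e1 e2) :
    ∃ a1 a2, a1 ∈ L ∧ a2 ∈ L ∧ e1 ∈ f a1 ∧ e2 ∈ f a2 ∧
      ((a1 = a2 ∧ llt (f a1) e1 e2) ∨ llt L a1 a2) := by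
  rw [llt_iff_sublist] at h
  induction L with
  | nil => simp at h
  | cons a L ih =>
    rw [flatMap_cons, sublist_append_iff] at h
    obtain ⟨u, v, huv, hu, hv⟩ := h
    rcases u with _ | ⟨x, _ | ⟨y, u'⟩⟩
    · simp only [List.nil_append] at huv
      subst huv
      obtain ⟨a1, a2, h1, h2, h3, h4, h5⟩ := ih hv
      refine ⟨a1, a2, mem_cons_of_mem _ h1, mem_cons_of_mem _ h2, h3, h4, ?_⟩
      rcases h5 with h5 | h5
      · exact Or.inl h5
      · exact Or.inr (llt_of_sublist (List.sublist_cons_self _ _) h5)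
    · have hx : e1 = x ∧ [e2] = v := by
        constructor
        · exact (List.cons.injEq _ _ _ _ ▸ huv).1
        · exact (List.cons.injEq _ _ _ _ ▸ huv).2
      obtain ⟨rfl, hv2⟩ := hx
      subst hv2
      have h1 : e1 ∈ f a := singleton_sublist.1 hu
      have h2 : e2 ∈ L.flatMap f := singleton_sublist.1 hv
      obtain ⟨a2, ha2, he2⟩ := mem_flatMap.1 h2
      refine ⟨a, a2, mem_cons_self, mem_cons_of_mem _ ha2, h1, he2, Or.inr ?_⟩
      rw [llt_iff_sublist]
      exact (singleton_sublist.2 ha2).cons₂ a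
    · have hx : e1 = x ∧ e2 = y ∧ u' ++ v = [] := by
        have h1 := (List.cons.injEq _ _ _ _ ▸ huv).1
        have h2 := (List.cons.injEq _ _ _ _ ▸ huv).2
        have h3 := (List.cons.injEq _ _ _ _ ▸ h2).1
        have h4 := (List.cons.injEq _ _ _ _ ▸ h2).2
        exact ⟨h1, h3, h4.symm⟩
      obtain ⟨rfl, rfl, h0⟩ := hx
      have hu' : u' = [] := (List.append_eq_nil_iff.1 h0).1
      subst hu'
      exact ⟨a, a, mem_cons_self, mem_cons_self,
        (llt_iff_sublist.2 hu).mem_left, (llt_iff_sublist.2 hu).mem_right,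
        Or.inl ⟨rfl, llt_iff_sublist.2 hu⟩⟩

theorem llt_ne_head {l : List α} {a b : α} (hnd : (a :: l).Nodup) :
    ¬ llt (a :: l) b a := by
  rintro ⟨i, j, hij, h1, h2⟩
  have inj := List.nodup_iff_injective_get.1 hnd
  have hej : j = (⟨0, by simp⟩ : Fin (a :: l).length) := inj (by simpa using h2)
  have n1 : (i : ℕ) < j := hij
  simp only [Fin.ext_iff, Fin.val_mk] at hej
  omega



open STM STM.History List

attribute [local instance] Classical.propDecidable

variable {Tid Obj Val : Type}

theorem lt_llt {H : History Tid Obj Val} {e1 e2 : Ev Tid Obj Val} :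
    H.Lt e1 e2 ↔ llt H.evs e1 e2 := Iff.rfl

theorem lt_mem_left {H : History Tid Obj Val} {e1 e2 : Ev Tid Obj Val}
    (h : H.Lt e1 e2) : H.Mem e1 := (lt_llt.1 h).mem_left

theorem lt_mem_right {H : History Tid Obj Val} {e1 e2 : Ev Tid Obj Val}
    (h : H.Lt e1 e2) : H.Mem e2 := (lt_llt.1 h).mem_right

/-- `e` is the last event of transaction `t` in `H`. -/
def IsLast (H : History Tid Obj Val) (t : Tid) (e : Ev Tid Obj Val) : Prop :=
  H.Mem e ∧ e.tid = t ∧ ∀ e', H.Mem e' → e'.tid = t → e' = e ∨ H.Lt e' e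

theorem isLast_unique {H : History Tid Obj Val} {t : Tid} {e1 e2 : Ev Tid Obj Val}
    (h1 : IsLast H t e1) (h2 : IsLast H t e2) : e1 = e2 := by
  rcases h2.2.2 e1 h1.1 h1.2.1 with h | h
  · exact h
  · rcases h1.2.2 e2 h2.1 h2.2.1 with h' | h'
    · exact h'.symm
    · exact absurd (lt_llt.1 h) (llt_asymm H.nodup (lt_llt.1 h'))

theorem exists_isLast {H : History Tid Obj Val} {t : Tid} (ht : t ∈ H.txns) :
    ∃ e, IsLast H t e := by
  classical
  obtain ⟨e0, he0, htid⟩ := ht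
  set l := H.evs.filter (fun e => decide (Ev.tid e = t)) with hl
  have hne : l ≠ [] := by
    have : e0 ∈ l := List.mem_filter.2 ⟨he0, by simp [htid]⟩
    exact List.ne_nil_of_mem this
  refine ⟨l.getLast hne, ?_, ?_, ?_⟩
  · exact List.mem_of_mem_filter (l.getLast_mem hne)
  · have := List.mem_filter.1 (l.getLast_mem hne)
    simpa using this.2
  · intro e' hm' ht'
    have hmem : e' ∈ l := List.mem_filter.2 ⟨hm', by simp [ht']⟩
    rw [← List.dropLast_append_getLast hne] at hmem
    rcases List.mem_append.1 hmem with h | h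
    · right
      have h1 : llt l e' (l.getLast hne) := by
        rw [llt_iff_sublist]
        conv_rhs => rw [← List.dropLast_append_getLast hne]
        exact Sublist.append (singleton_sublist.2 h) (Sublist.refl _)
      exact lt_llt.2 (llt_of_sublist (List.filter_sublist) h1)
    · left; simpa using h

/-- The incomplete transactions of `H`, as a list. -/
noncomputable def incompleteTids (H : History Tid Obj Val) : List Tid :=
  ((H.evs.map Ev.tid).dedup).filter (fun t => decide (H.incomplete t))

theorem mem_incompleteTids {H : History Tid Obj Val} {t : Tid} :
    t ∈ incompleteTids H ↔ H.incomplete t := by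
  simp only [incompleteTids, List.mem_filter, List.mem_dedup, List.mem_map,
    decide_eq_true_iff]
  constructor
  · exact fun h => h.2
  · intro h
    exact ⟨by obtain ⟨e, he, htid⟩ := h.1; exact ⟨e, he, htid⟩, h⟩

/-- Abort events to be inserted right after event `e`. -/
noncomputable def extras (H : History Tid Obj Val) (e : Ev Tid Obj Val) :
    List (Ev Tid Obj Val) :=
  ((incompleteTids H).filter (fun t => decide (IsLast H t e))).map Ev.abort

theorem mem_extras {H : History Tid Obj Val} {e a : Ev Tid Obj Val} :
    a ∈ extras H e ↔ ∃ t, H.incomplete t ∧ IsLast H t e ∧ a = Ev.abort t := by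
  simp only [extras, List.mem_map, List.mem_filter, mem_incompleteTids,
    decide_eq_true_iff]
  constructor
  · rintro ⟨t, ⟨h1, h2⟩, rfl⟩; exact ⟨t, h1, h2, rfl⟩
  · rintro ⟨t, h1, h2, rfl⟩; exact ⟨t, ⟨h1, h2⟩, rfl⟩

theorem not_mem_of_mem_extras {H : History Tid Obj Val} {e a : Ev Tid Obj Val}
    (h : a ∈ extras H e) : ¬ H.Mem a := by
  obtain ⟨t, h1, _, rfl⟩ := mem_extras.1 h
  exact h1.2.2

/-- Block of the completion: the event followed by inserted aborts. -/
noncomputable def cblock (H : History Tid Obj Val) (e : Ev Tid Obj Val) :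
    List (Ev Tid Obj Val) := e :: extras H e

theorem nodup_cblock {H : History Tid Obj Val} {e : Ev Tid Obj Val} (he : H.Mem e) :
    (cblock H e).Nodup := by
  refine List.nodup_cons.2 ⟨fun h => not_mem_of_mem_extras h he, ?_⟩
  refine List.Nodup.map (fun a b h => by injection h) ?_
  exact ((List.nodup_dedup _).filter _).filter _

theorem nodup_HcEvs (H : History Tid Obj Val) :
    (H.evs.flatMap (cblock H)).Nodup := by
  refine List.nodup_flatMap.2 ⟨fun e he => nodup_cblock he, ?_⟩
  refine H.nodup.imp_of_mem ?_
  intro a b ha hb hne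
  intro x hxa hxb
  rcases List.mem_cons.1 hxa with rfl | hxa
  · rcases List.mem_cons.1 hxb with h | hxb
    · exact hne h
    · exact not_mem_of_mem_extras hxb ha
  · rcases List.mem_cons.1 hxb with rfl | hxb
    · exact not_mem_of_mem_extras hxa hb
    · obtain ⟨t, h1, h2, rfl⟩ := mem_extras.1 hxa
      obtain ⟨t', h1', h2', he⟩ := mem_extras.1 hxb
      have : t' = t := by injection he.symm
      subst this
      exact hne (isLast_unique h2 h2')

/-- The completion of `H`. -/
noncomputable def mkHc (H : History Tid Obj Val) : History Tid Obj Val :=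
  ⟨H.evs.flatMap (cblock H), nodup_HcEvs H⟩

theorem mem_mkHc {H : History Tid Obj Val} {a : Ev Tid Obj Val} :
    (mkHc H).Mem a ↔ H.Mem a ∨ ∃ t, H.incomplete t ∧ a = Ev.abort t := by
  constructor
  · intro h
    obtain ⟨e, he, hae⟩ := List.mem_flatMap.1 h
    rcases List.mem_cons.1 hae with rfl | hae
    · exact Or.inl he
    · obtain ⟨t, h1, _, rfl⟩ := mem_extras.1 hae
      exact Or.inr ⟨t, h1, rfl⟩
  · rintro (h | ⟨t, h1, rfl⟩)
    · exact List.mem_flatMap.2 ⟨a, h, List.mem_cons_self⟩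
    · obtain ⟨el, hl⟩ := exists_isLast h1.1
      refine List.mem_flatMap.2 ⟨el, hl.1, List.mem_cons_of_mem _ ?_⟩
      exact mem_extras.2 ⟨t, h1, hl, rfl⟩

theorem lt_mkHc_iff {H : History Tid Obj Val} {e1 e2 : Ev Tid Obj Val}
    (h1 : H.Mem e1) (h2 : H.Mem e2) : H.Lt e1 e2 ↔ (mkHc H).Lt e1 e2 := by
  rw [lt_llt, lt_llt]
  constructor
  · intro h
    exact llt_flatMap_of_llt h (List.mem_cons_self) (List.mem_cons_self)
  · intro h
    obtain ⟨a1, a2, ha1, ha2, m1, m2, hc⟩ := llt_flatMap_elim h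
    have e1a : e1 = a1 := by
      rcases List.mem_cons.1 m1 with h' | h'
      · exact h'
      · exact absurd h1 (not_mem_of_mem_extras h')
    have e2a : e2 = a2 := by
      rcases List.mem_cons.1 m2 with h' | h'
      · exact h'
      · exact absurd h2 (not_mem_of_mem_extras h')
    subst e1a; subst e2a
    rcases hc with ⟨heq, hlt⟩ | hlt
    · rw [← heq] at hlt
      exact absurd hlt (llt_irrefl (nodup_cblock (show H.Mem e1 from ha1)) _)
    · exact hlt

theorem isCompletion_mkHc (H : History Tid Obj Val) : H.IsCompletion (mkHc H) := by
  refine ⟨fun e => mem_mkHc, fun e1 e2 h1 h2 => lt_mkHc_iff h1 h2, ?_⟩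
  intro t ht
  obtain ⟨el, hl⟩ := exists_isLast ht.1
  have habort : Ev.abort t ∈ extras H el := mem_extras.2 ⟨t, ht, hl, rfl⟩
  constructor
  · intro e he htid
    rcases hl.2.2 e he htid with rfl | hlt
    · refine lt_llt.2 (llt_flatMap_of_mem hl.1 ?_)
      rw [llt_iff_sublist]
      exact (singleton_sublist.2 habort).cons₂ e
    · exact lt_llt.2 (llt_flatMap_of_llt (lt_llt.1 hlt) (List.mem_cons_self)
        (List.mem_cons_of_mem _ habort))
  · intro e he
    constructor
    · intro h
      obtain ⟨a1, a2, ha1, ha2, m1, m2, hc⟩ := llt_flatMap_elim (lt_llt.1 h)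
      have hlast : IsLast H t a1 := by
        rcases List.mem_cons.1 m1 with h' | h'
        · exact absurd (h' ▸ ha1 : H.Mem (Ev.abort t)) ht.2.2
        · obtain ⟨t', h1', h2', he'⟩ := mem_extras.1 h'
          have : t' = t := by injection he'.symm
          subst this
          exact h2'
      have e2a : e = a2 := by
        rcases List.mem_cons.1 m2 with h' | h'
        · exact h'
        · exact absurd he (not_mem_of_mem_extras h')
      subst e2a
      rcases hc with ⟨heq, hlt⟩ | hlt
      · subst heq
        exact absurd hlt (llt_ne_head (nodup_cblock (show H.Mem a1 from ha1)))
      · intro e' he' htid'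
        rcases hlast.2.2 e' he' htid' with rfl | h'
        · exact lt_llt.2 hlt
        · exact lt_llt.2 (llt_trans H.nodup (lt_llt.1 h') hlt)
    · intro hall
      have hlt : H.Lt el e := hall el hl.1 hl.2.1
      exact lt_llt.2 (llt_flatMap_of_llt (lt_llt.1 hlt)
        (List.mem_cons_of_mem _ habort) (List.mem_cons_self))

theorem CO_facts {H : History Tid Obj Val} {t1 t2 : Tid} (h : H.CO t1 t2) :
    t1 ∈ H.txns ∧ t2 ∈ H.txns ∧ t1 ≠ t2 := by
  obtain ⟨e1, e2, ht1, ht2, hlt, hd⟩ := h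
  refine ⟨⟨e1, lt_mem_left hlt, ht1⟩, ⟨e2, lt_mem_right hlt, ht2⟩, ?_⟩
  rcases hd with ⟨a, b, x, hab, he1, he2, _⟩ | ⟨a, b, x, v, hab, he1, he2, _⟩ |
    ⟨a, b, x, v, hab, he1, he2, _⟩ <;>
    (subst he1; subst he2; subst ht1; subst ht2; exact fun h => hab (by simpa [Ev.tid] using h))

theorem valid_of_legal {H : History Tid Obj Val} (h : H.Legal) : H.Valid := by
  intro t x v hr
  obtain ⟨i, h1, _, _, h4⟩ := h t x v hr
  exact ⟨i, h1, h4⟩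

theorem RT_trans {S : History Tid Obj Val} {a b c : Tid}
    (hab : S.RT a b) (hbc : S.RT b c) : S.RT a c := by
  obtain ⟨eb, hmb, htb⟩ := hab.2.1
  refine ⟨hab.1, hbc.2.1, ?_, ?_⟩
  · rintro rfl
    obtain ⟨ea, hma, hta⟩ := hab.1
    exact llt_asymm S.nodup (lt_llt.1 (hab.2.2.2 ea eb hma hmb hta htb))
      (lt_llt.1 (hbc.2.2.2 eb ea hmb hma htb hta))
  · intro e1 e2 hm1 hm2 ht1 ht2
    exact lt_llt.2 (llt_trans S.nodup
      (lt_llt.1 (hab.2.2.2 e1 eb hm1 hmb ht1 htb))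
      (lt_llt.1 (hbc.2.2.2 eb e2 hmb hm2 htb ht2)))

theorem coOpaque_cgAcyclic (H : History Tid Obj Val) (h : H.CoOpaque) :
    H.CGAcyclic := by
  obtain ⟨-, Hc, S, hcomp, hseq, -, hequiv, hRT, hCO⟩ := h
  have hedge : ∀ t1 t2, H.CGedge t1 t2 → S.RT t1 t2 := by
    intro t1 t2 h
    rcases h with h | h
    · exact hRT _ _ h
    · have hne : t1 ≠ t2 := (CO_facts h).2.2
      obtain ⟨e1, e2, ht1, ht2, hlt, hd⟩ := hCO _ _ h
      have m1 : S.Mem e1 := lt_mem_left hlt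
      have m2 : S.Mem e2 := lt_mem_right hlt
      rcases hseq t1 t2 ⟨e1, m1, ht1⟩ ⟨e2, m2, ht2⟩ ((CO_facts (hCO _ _ h)).2.2) with h' | h'
      · exact h'
      · exact absurd (lt_llt.1 (h'.2.2.2 e2 e1 m2 m1 ht2 ht1))
          (llt_asymm S.nodup (lt_llt.1 hlt))
  intro t htt
  have htrans : Transitive S.RT := fun _ _ _ => RT_trans
  have : S.RT t t := by
    have h1 : Relation.TransGen S.RT t t := Relation.TransGen.mono hedge t t htt
    rwa [@Relation.transGen_eq_self _ _ ⟨fun _ _ _ => RT_trans⟩] at h1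
  exact this.2.2.1 rfl

theorem cgAcyclic_coOpaque (H : History Tid Obj Val) (hleg : H.Legal)
    (hac : H.CGAcyclic) : H.CoOpaque := by
  classical
  -- Extend the conflict graph order to a linear order on `Tid`.
  set R : Tid → Tid → Prop := Relation.ReflGen (Relation.TransGen H.CGedge) with hRdef
  haveI hrefl : IsRefl Tid R := ⟨fun a => Relation.ReflGen.refl⟩
  haveI htr : IsTrans Tid R := ⟨fun a b c hab hbc => by
    cases hab with
    | refl => exact hbc
    | single h =>
      cases hbc with
      | refl => exact Relation.ReflGen.single h
      | single h' => exact Relation.ReflGen.single (h.trans h')⟩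
  haveI hpre : IsPreorder Tid R := ⟨⟩
  haveI hanti : IsAntisymm Tid R := ⟨fun a b hab hba => by
    cases hab with
    | refl => rfl
    | single h =>
      cases hba with
      | refl => rfl
      | single h' => exact absurd (h.trans h') (hac a)⟩
  haveI hpo : IsPartialOrder Tid R := ⟨⟩
  obtain ⟨s, hlin, hrs⟩ := extend_partialOrder R
  haveI := hlin
  set HC : History Tid Obj Val := mkHc H with hHC
  set ts : List Tid := List.insertionSort s ((HC.evs.map Ev.tid).dedup) with hts
  have hts_mem : ∀ t : Tid, t ∈ ts ↔ ∃ e, HC.Mem e ∧ Ev.tid e = t := by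
    intro t
    rw [hts, (List.perm_insertionSort s _).mem_iff, List.mem_dedup, List.mem_map]
    constructor
    · rintro ⟨e, he, rfl⟩; exact ⟨e, he, rfl⟩
    · rintro ⟨e, he, rfl⟩; exact ⟨e, he, rfl⟩
  have hts_nodup : ts.Nodup := by
    rw [hts]
    exact ((List.perm_insertionSort s _).nodup_iff).2 (List.nodup_dedup _)
  have hts_sorted : List.Pairwise s ts := List.pairwise_insertionSort s _
  have hlt_ts : ∀ t1 t2 : Tid, s t1 t2 → t1 ≠ t2 → t1 ∈ ts → t2 ∈ ts → llt ts t1 t2 := by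
    intro t1 t2 hs12 hne h1 h2
    obtain ⟨i, hi⟩ := List.mem_iff_get.1 h1
    obtain ⟨j, hj⟩ := List.mem_iff_get.1 h2
    have hij : (i : ℕ) ≠ j := by
      intro h
      exact hne (hi.symm.trans (by rw [show i = j from Fin.ext h, hj]))
    rcases lt_or_gt_of_ne hij with h | h
    · exact ⟨i, j, h, hi, hj⟩
    · have := List.pairwise_iff_get.1 hts_sorted j i h
      rw [hi, hj] at this
      exact absurd (_root_.antisymm hs12 this) hne
  have hHtx : ∀ t : Tid, t ∈ H.txns → t ∈ ts := by
    rintro t ⟨e, he, rfl⟩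
    exact (hts_mem _).2 ⟨e, mem_mkHc.2 (Or.inl he), rfl⟩
  have hedge_ts : ∀ t1 t2 : Tid, H.CGedge t1 t2 → t1 ≠ t2 → t1 ∈ ts → t2 ∈ ts →
      llt ts t1 t2 := by
    intro t1 t2 h hne h1 h2
    exact hlt_ts t1 t2 (hrs _ _ (Relation.ReflGen.single (Relation.TransGen.single h)))
      hne h1 h2
  -- the serialization S
  set blocks : Tid → List (Ev Tid Obj Val) :=
    fun t => HC.evs.filter (fun e => decide (Ev.tid e = t)) with hblocks
  have hnd : (ts.flatMap blocks).Nodup := by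
    refine List.nodup_flatMap.2 ⟨fun t _ => HC.nodup.filter _, ?_⟩
    refine hts_nodup.imp ?_
    intro a b hne x hxa hxb
    have h1 : Ev.tid x = a := by simpa using (List.mem_filter.1 hxa).2
    have h2 : Ev.tid x = b := by simpa using (List.mem_filter.1 hxb).2
    exact hne (h1.symm.trans h2)
  set S : History Tid Obj Val := ⟨ts.flatMap blocks, hnd⟩ with hS
  have hSmem : ∀ e, S.Mem e ↔ HC.Mem e := by
    intro e
    constructor
    · intro h
      obtain ⟨t, _, he⟩ := List.mem_flatMap.1 h
      exact (List.mem_filter.1 he).1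
    · intro h
      refine List.mem_flatMap.2 ⟨e.tid, (hts_mem _).2 ⟨e, h, rfl⟩, ?_⟩
      exact List.mem_filter.2 ⟨h, by simp⟩
  have hmemHS : ∀ e, H.Mem e → S.Mem e := fun e he =>
    (hSmem e).2 (mem_mkHc.2 (Or.inl he))
  have hmemSH : ∀ (t : Tid) (x : Obj) (v : Val), S.Mem (Ev.read t x (some v)) →
      H.Mem (Ev.read t x (some v)) := by
    intro t x v h
    rcases mem_mkHc.1 ((hSmem _).1 h) with h | ⟨t', _, h'⟩
    · exact h
    · exact absurd h' (by simp)
  have hmemSHc : ∀ (t : Tid), S.Mem (Ev.commit t) → H.Mem (Ev.commit t) := by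
    intro t h
    rcases mem_mkHc.1 ((hSmem _).1 h) with h | ⟨t', _, h'⟩
    · exact h
    · exact absurd h' (by simp)
  have hmemSHw : ∀ (t : Tid) (x : Obj) (v : Val), S.Mem (Ev.write t x v) →
      H.Mem (Ev.write t x v) := by
    intro t x v h
    rcases mem_mkHc.1 ((hSmem _).1 h) with h | ⟨t', _, h'⟩
    · exact h
    · exact absurd h' (by simp)
  have hWset : ∀ (t : Tid) (x : Obj), H.Wset t x → S.Wset t x := by
    rintro t x ⟨v, hv⟩
    exact ⟨v, hmemHS _ hv⟩
  have hS_of_ts : ∀ (t1 t2 : Tid) (e1 e2 : Ev Tid Obj Val), llt ts t1 t2 →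
      HC.Mem e1 → Ev.tid e1 = t1 → HC.Mem e2 → Ev.tid e2 = t2 → S.Lt e1 e2 := by
    intro t1 t2 e1 e2 h m1 ht1 m2 ht2
    refine lt_llt.2 (llt_flatMap_of_llt h ?_ ?_)
    · exact List.mem_filter.2 ⟨m1, by simp [ht1]⟩
    · exact List.mem_filter.2 ⟨m2, by simp [ht2]⟩
  have hS_same : ∀ (e1 e2 : Ev Tid Obj Val), HC.Lt e1 e2 → Ev.tid e1 = Ev.tid e2 →
      S.Lt e1 e2 := by
    intro e1 e2 h htid
    have m1 : HC.Mem e1 := lt_mem_left h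
    have ht : Ev.tid e1 ∈ ts := (hts_mem _).2 ⟨e1, m1, rfl⟩
    refine lt_llt.2 (llt_flatMap_of_mem ht ?_)
    exact llt_filter (lt_llt.1 h) (by simp) (by simp [← htid])
  have hRTS : ∀ t1 t2 : Tid, llt ts t1 t2 → S.RT t1 t2 := by
    intro t1 t2 h
    have h1 : t1 ∈ ts := h.mem_left
    have h2 : t2 ∈ ts := h.mem_right
    obtain ⟨e1, m1, ht1⟩ := (hts_mem t1).1 h1
    obtain ⟨e2, m2, ht2⟩ := (hts_mem t2).1 h2
    refine ⟨⟨e1, (hSmem _).2 m1, ht1⟩, ⟨e2, (hSmem _).2 m2, ht2⟩, ?_, ?_⟩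
    · rintro rfl
      exact llt_irrefl hts_nodup t1 h
    · intro f1 f2 hm1 hm2 hf1 hf2
      exact hS_of_ts _ _ _ _ h ((hSmem _).1 hm1) hf1 ((hSmem _).1 hm2) hf2
  have hCO_S : ∀ t1 t2 : Tid, H.CO t1 t2 → S.CO t1 t2 := by
    intro t1 t2 h
    obtain ⟨htx1, htx2, hne⟩ := CO_facts h
    have hts12 : llt ts t1 t2 := hedge_ts t1 t2 (Or.inr h) hne (hHtx _ htx1) (hHtx _ htx2)
    obtain ⟨e1, e2, ht1, ht2, hlt, hd⟩ := h
    have m1 : H.Mem e1 := lt_mem_left hlt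
    have m2 : H.Mem e2 := lt_mem_right hlt
    refine ⟨e1, e2, ht1, ht2, ?_, ?_⟩
    · exact hS_of_ts _ _ _ _ hts12 (mem_mkHc.2 (Or.inl m1)) ht1 (mem_mkHc.2 (Or.inl m2)) ht2
    · rcases hd with ⟨a, b, x, hab, he1, he2, hw1, hw2⟩ |
        ⟨a, b, x, v, hab, he1, he2, hw⟩ | ⟨a, b, x, v, hab, he1, he2, hw⟩
      · exact Or.inl ⟨a, b, x, hab, he1, he2, hWset _ _ hw1, hWset _ _ hw2⟩
      · exact Or.inr (Or.inl ⟨a, b, x, v, hab, he1, he2, hWset _ _ hw⟩)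
      · exact Or.inr (Or.inr ⟨a, b, x, v, hab, he1, he2, hWset _ _ hw⟩)
  -- S is t-sequential
  have hseq : S.TSequential := by
    intro t1 t2 h1 h2 hne
    have m1 : t1 ∈ ts := by
      obtain ⟨e, he, ht⟩ := h1
      exact (hts_mem _).2 ⟨e, (hSmem _).1 he, ht⟩
    have m2 : t2 ∈ ts := by
      obtain ⟨e, he, ht⟩ := h2
      exact (hts_mem _).2 ⟨e, (hSmem _).1 he, ht⟩
    rcases llt_total m1 m2 hne with h | h
    · exact Or.inl (hRTS _ _ h)
    · exact Or.inr (hRTS _ _ h)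
  -- a common step: a commit that precedes a read in H precedes it in S
  have hcommit_read : ∀ (j t : Tid) (x : Obj) (v : Val),
      H.Lt (Ev.commit j) (Ev.read t x (some v)) → H.Wset j x →
      S.Lt (Ev.commit j) (Ev.read t x (some v)) := by
    intro j t x v hlt hw
    by_cases hjt : j = t
    · subst hjt
      exact hS_same _ _ ((lt_mkHc_iff (lt_mem_left hlt) (lt_mem_right hlt)).1 hlt) rfl
    · have hco : H.CO j t :=
        ⟨Ev.commit j, Ev.read t x (some v), rfl, rfl, hlt,
          Or.inr (Or.inl ⟨j, t, x, v, hjt, rfl, rfl, hw⟩)⟩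
      obtain ⟨htx1, htx2, hne⟩ := CO_facts hco
      have hts12 : llt ts j t := hedge_ts j t (Or.inr hco) hne (hHtx _ htx1) (hHtx _ htx2)
      exact hS_of_ts _ _ _ _ hts12 (mem_mkHc.2 (Or.inl (lt_mem_left hlt))) rfl
        (mem_mkHc.2 (Or.inl (lt_mem_right hlt))) rfl
  -- S is legal
  have hlegS : S.Legal := by
    intro t x v hr
    have hrH : H.Mem (Ev.read t x (some v)) := hmemSH t x v hr
    obtain ⟨i, hlti, hwi, hmax, hwrite⟩ := hleg t x v hrH
    refine ⟨i, hcommit_read i t x v hlti hwi, hWset _ _ hwi, ?_, hmemHS _ hwrite⟩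
    intro j hjS hjW
    have hjWH : H.Wset j x := by
      obtain ⟨v', hv'⟩ := hjW
      exact ⟨v', hmemSHw _ _ _ hv'⟩
    have hcjH : H.Mem (Ev.commit j) := hmemSHc j (lt_mem_left hjS)
    have hjH : H.Lt (Ev.commit j) (Ev.read t x (some v)) := by
      by_contra hcon
      have hne : Ev.commit j ≠ Ev.read t x (some v) := by simp
      rcases llt_total (show Ev.commit j ∈ H.evs from hcjH)
        (show Ev.read t x (some v) ∈ H.evs from hrH) hne with h | h
      · exact hcon (lt_llt.2 h)
      · -- the read precedes commit j in H; lift to S and contradict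
        have hSrc : S.Lt (Ev.read t x (some v)) (Ev.commit j) := by
          by_cases hjt : j = t
          · subst hjt
            exact hS_same _ _ ((lt_mkHc_iff hrH hcjH).1 (lt_llt.2 h)) rfl
          · have hco : H.CO t j :=
              ⟨Ev.read t x (some v), Ev.commit j, rfl, rfl, lt_llt.2 h,
                Or.inr (Or.inr ⟨t, j, x, v, fun hh => hjt hh.symm, rfl, rfl, hjWH⟩)⟩
            obtain ⟨htx1, htx2, hne'⟩ := CO_facts hco
            have hts12 : llt ts t j :=
              hedge_ts t j (Or.inr hco) hne' (hHtx _ htx1) (hHtx _ htx2)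
            exact hS_of_ts _ _ _ _ hts12 (mem_mkHc.2 (Or.inl hrH)) rfl
              (mem_mkHc.2 (Or.inl hcjH)) rfl
        exact llt_asymm S.nodup (lt_llt.1 hjS) (lt_llt.1 hSrc)
    rcases hmax j hjH hjWH with h | h
    · exact Or.inl h
    · right
      have hij : j ≠ i := by
        rintro rfl
        exact llt_irrefl H.nodup _ (lt_llt.1 h)
      have hco : H.CO j i :=
        ⟨Ev.commit j, Ev.commit i, rfl, rfl, h, Or.inl ⟨j, i, x, hij, rfl, rfl, hjWH, hwi⟩⟩
      obtain ⟨htx1, htx2, hne'⟩ := CO_facts hco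
      have hts12 : llt ts j i := hedge_ts j i (Or.inr hco) hne' (hHtx _ htx1) (hHtx _ htx2)
      exact hS_of_ts _ _ _ _ hts12 (mem_mkHc.2 (Or.inl (lt_mem_left h))) rfl
        (mem_mkHc.2 (Or.inl (lt_mem_right h))) rfl
  -- assemble
  refine ⟨valid_of_legal hleg, HC, S, isCompletion_mkHc H, hseq, hlegS,
    fun e => hSmem e, ?_, hCO_S⟩
  intro t1 t2 h
  exact hRTS t1 t2 (hedge_ts t1 t2 (Or.inl h) h.2.2.1 (hHtx _ h.1) (hHtx _ h.2.1))

end STMAux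


open STM History in
/-- Graph characterization of conflict-opacity: a legal history is
conflict-opaque iff its conflict graph is acyclic. -/
theorem coOpaque_iff_cgAcyclic {Tid Obj Val : Type}
    (H : STM.History Tid Obj Val)
    (hleg : H.Legal) :
    H.CoOpaque ↔ H.CGAcyclic := by
  constructor
  · exact STMAux.coOpaque_cgAcyclic H
  · exact fun h => STMAux.cgAcyclic_coOpaque H hleg h
end
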